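/- An obtuse random variable X in ℂ^N (taking values v₁,…,v_{N+1} of an obtuse system with probabilities pᵢ = 1/(1+‖vᵢ‖²)) is centered and normalized: E[X^i] = 0 and E[conj(X^i) X^j] = δᵢⱼ for all coordinates i, j = 1,…,N. -/

import Mathlib

open scoped InnerProductSpace ComplexConjugate

section aux

variable {N : ℕ}

private noncomputable def wvec (v : Fin (N + 1) → EuclideanSpace ℂ (Fin N))
    (i : Fin (N + 1)) : EuclideanSpace ℂ (Fin (N + 1)) :=
  WithLp.toLp 2 (Fin.cons 1 (v i) : Fin (N + 1) → ℂ)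

private lemma wvec_zero (v : Fin (N + 1) → EuclideanSpace ℂ (Fin N)) (i : Fin (N + 1)) :
    wvec v i 0 = 1 := rfl

private lemma wvec_succ (v : Fin (N + 1) → EuclideanSpace ℂ (Fin N)) (i : Fin (N + 1))
    (k : Fin N) : wvec v i k.succ = v i k := rfl

private lemma wvec_inner (v : Fin (N + 1) → EuclideanSpace ℂ (Fin N)) (i j : Fin (N + 1)) :
    (inner ℂ (wvec v i) (wvec v j) : ℂ) = 1 + inner ℂ (v i) (v j) := by
  simp only [PiLp.inner_apply, RCLike.inner_apply]
  rw [Fin.sum_univ_succ]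
  simp [wvec_zero, wvec_succ]

private lemma wvec_norm_sq (v : Fin (N + 1) → EuclideanSpace ℂ (Fin N)) (i : Fin (N + 1)) :
    (‖wvec v i‖ : ℝ) ^ 2 = 1 + ‖v i‖ ^ 2 := by
  have h1 : (inner ℂ (wvec v i) (wvec v i) : ℂ) = 1 + inner ℂ (v i) (v i) := wvec_inner v i i
  rw [inner_self_eq_norm_sq_to_K, inner_self_eq_norm_sq_to_K] at h1
  exact Complex.ofReal_injective (by push_cast; exact h1)

end aux

/-- an obtuse random variable `X` (taking value `vᵢ` with
probability `pᵢ = 1/(1+‖vᵢ‖²)`, the `vᵢ` forming an obtuse system) is centered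
and normalized: `E[X^k] = 0` and `E[conj(X^k) X^l] = δ_{kl}`. -/
theorem stmt13 {N : ℕ} (v : Fin (N + 1) → EuclideanSpace ℂ (Fin N))
    (hv : ∀ i j, i ≠ j → (inner ℂ (v i) (v j) : ℂ) = -1) :
    (∀ k : Fin N, ∑ i, ((1 / (1 + ‖v i‖ ^ 2) : ℝ) : ℂ) * v i k = 0) ∧
    (∀ k l : Fin N,
      ∑ i, ((1 / (1 + ‖v i‖ ^ 2) : ℝ) : ℂ) * (starRingEnd ℂ) (v i k) * v i l =
        if k = l then 1 else 0) := by
  set w := wvec v with hw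
  have hpos : ∀ i, (0 : ℝ) < 1 + ‖v i‖ ^ 2 := fun i => by positivity
  have hnpos : ∀ i, (0 : ℝ) < ‖w i‖ := by
    intro i
    have := wvec_norm_sq v i
    nlinarith [norm_nonneg (w i), hpos i]
  -- orthonormal family
  set u : Fin (N + 1) → EuclideanSpace ℂ (Fin (N + 1)) :=
    fun i => ((‖w i‖ : ℂ)⁻¹) • w i with hu
  have huinner : ∀ i j, (inner ℂ (u i) (u j) : ℂ) =
      ((‖w i‖ : ℂ)⁻¹ * (‖w j‖ : ℂ)⁻¹) * inner ℂ (w i) (w j) := by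
    intro i j
    rw [hu]
    simp only [inner_smul_left, inner_smul_right, map_inv₀, Complex.conj_ofReal]
    ring
  have hon : Orthonormal ℂ u := by
    rw [orthonormal_iff_ite]
    intro i j
    by_cases hij : i = j
    · subst hij
      rw [huinner, inner_self_eq_norm_sq_to_K]
      simp only [if_pos rfl, ↓reduceIte]
      have : (‖w i‖ : ℂ) ≠ 0 := by
        exact_mod_cast (hnpos i).ne'
      field_simp
      norm_cast
    · rw [huinner, wvec_inner, hv i j hij, if_neg hij]
      ring
  have hcard : Fintype.card (Fin (N + 1)) =
      Module.finrank ℂ (EuclideanSpace ℂ (Fin (N + 1))) := by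
    simp [finrank_euclideanSpace_fin]
  let b := (basisOfOrthonormalOfCardEqFinrank hon hcard).toOrthonormalBasis
    (by rwa [coe_basisOfOrthonormalOfCardEqFinrank])
  have hb : ∀ i, b i = u i := by
    intro i
    have : (b : Fin (N + 1) → EuclideanSpace ℂ (Fin (N + 1))) =
        (basisOfOrthonormalOfCardEqFinrank hon hcard : Fin (N + 1) → _) :=
      (basisOfOrthonormalOfCardEqFinrank hon hcard).coe_toOrthonormalBasis _
    rw [this, coe_basisOfOrthonormalOfCardEqFinrank]
  -- master identity
  have master : ∀ a c : Fin (N + 1),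
      ∑ i, ((1 / (1 + ‖v i‖ ^ 2) : ℝ) : ℂ) * (starRingEnd ℂ) (w i c) * w i a =
        if a = c then 1 else 0 := by
    intro a c
    have key := b.sum_inner_mul_inner (EuclideanSpace.single a (1 : ℂ))
      (EuclideanSpace.single c (1 : ℂ))
    have hs : ∀ i, (inner ℂ (EuclideanSpace.single a (1 : ℂ)) (b i) : ℂ) *
        inner ℂ (b i) (EuclideanSpace.single c (1 : ℂ)) =
        ((1 / (1 + ‖v i‖ ^ 2) : ℝ) : ℂ) * (starRingEnd ℂ) (w i c) * w i a := by
      intro i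
      rw [hb i, hu]
      simp only [EuclideanSpace.inner_single_left, EuclideanSpace.inner_single_right,
        PiLp.smul_apply, smul_eq_mul, map_one, one_mul, map_mul, map_inv₀,
        Complex.conj_ofReal]
      have h2 : ((‖w i‖ : ℂ))⁻¹ * ((‖w i‖ : ℂ))⁻¹ = ((1 / (1 + ‖v i‖ ^ 2) : ℝ) : ℂ) := by
        rw [← mul_inv]
        have : (‖w i‖ : ℂ) * (‖w i‖ : ℂ) = ((1 + ‖v i‖ ^ 2 : ℝ) : ℂ) := by
          rw [← Complex.ofReal_mul]
          congr 1
          have := wvec_norm_sq v i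
          nlinarith
        rw [this]
        push_cast
        rw [one_div]
      calc (‖w i‖ : ℂ)⁻¹ * w i a * ((‖w i‖ : ℂ)⁻¹ * (starRingEnd ℂ) (w i c))
          = ((‖w i‖ : ℂ)⁻¹ * (‖w i‖ : ℂ)⁻¹) * (starRingEnd ℂ) (w i c) * w i a := by ring
        _ = _ := by rw [h2]
    rw [Finset.sum_congr rfl fun i _ => hs i] at key
    rw [key]
    simp [EuclideanSpace.inner_single_left, EuclideanSpace.single_apply]
  constructor
  · intro k
    have := master k.succ 0
    rw [if_neg (Fin.succ_ne_zero k)] at this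
    simpa [wvec_zero, wvec_succ, hw] using this
  · intro k l
    have := master l.succ k.succ
    simp only [wvec_succ, hw] at this
    rw [this]
    simp [Fin.succ_inj, eq_comm]
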